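/- arXiv:2410.11818 — 2 statements merged into one kernel-verified Lean document; each statement's English description precedes it below -/
import Mathlib

section
/- For any n × n invertible matrix M over 𝔽₂ and any vector w ∈ 𝔽₂ⁿ, the permutation gate sending |v⟩ ↦ |Mv + w⟩ is Clifford. Conversely, every Clifford permutation gate is of this form for some invertible M and some w. -/
open Matrix

/-- An `n`-qubit gate: a `2^n × 2^n` complex matrix with rows and columns indexed
by bitstrings `v ∈ 𝔽₂ⁿ`. -/
abbrev Gate (n : ℕ) := Matrix (Fin n → ZMod 2) (Fin n → ZMod 2) ℂ

def IsUnitaryGate {n : ℕ} (U : Gate n) : Prop :=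
  U ∈ Matrix.unitaryGroup (Fin n → ZMod 2) ℂ

/-- The Pauli group `𝒫ₙ`: all matrices `c · X^u Z^v` with `c ∈ {1, -1, i, -i}`,
which is exactly the set of matrices `c · P₁ ⊗ ⋯ ⊗ Pₙ` with `Pⱼ ∈ {I₂, X, Y, Z}`. -/
def PauliGroup (n : ℕ) : Set (Gate n) :=
  { P | ∃ (c : ℂ) (u v : Fin n → ZMod 2),
      (c = 1 ∨ c = -1 ∨ c = Complex.I ∨ c = -Complex.I) ∧
      P = Matrix.of fun a b =>
        if a = b + u then c * (-1 : ℂ) ^ (∑ i, (v i * b i).val) else 0 }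

/-- The Clifford hierarchy: `𝒞₁ = 𝒫ₙ`, and for `k ≥ 2`,
`𝒞ₖ = {U unitary : U P U† ∈ 𝒞ₖ₋₁ for all P ∈ 𝒫ₙ}`.  (`CliffordHierarchy n k` is `𝒞ₖ`.) -/
def CliffordHierarchy (n : ℕ) : ℕ → Set (Gate n)
  | 0 => PauliGroup n
  | 1 => PauliGroup n
  | k + 2 => { U | IsUnitaryGate U ∧
      ∀ P ∈ PauliGroup n, U * P * Uᴴ ∈ CliffordHierarchy n (k + 1) }

/-- The permutation gate mapping `|v⟩` to `|σ v⟩`. -/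
def permGate {n : ℕ} (σ : Equiv.Perm (Fin n → ZMod 2)) : Gate n :=
  Matrix.of fun a b => if a = σ b then 1 else 0

def IsPermGate {n : ℕ} (U : Gate n) : Prop := ∃ σ, U = permGate σ

def IsDiagonalGate {n : ℕ} (U : Gate n) : Prop :=
  IsUnitaryGate U ∧ ∀ a b, a ≠ b → U a b = 0

/-- A gate is semi-Clifford if it is `φ₁ d φ₂` with `φ₁, φ₂` Clifford and `d` a diagonal gate. -/
def IsSemiClifford {n : ℕ} (U : Gate n) : Prop :=
  ∃ φ₁ d φ₂ : Gate n, φ₁ ∈ CliffordHierarchy n 2 ∧ φ₂ ∈ CliffordHierarchy n 2 ∧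
    IsDiagonalGate d ∧ U = φ₁ * d * φ₂

def IsCliffordPerm {n : ℕ} (U : Gate n) : Prop :=
  IsPermGate U ∧ U ∈ CliffordHierarchy n 2

/-- The permutation gate sending `|v⟩` to `|Mv + w⟩`. -/
def affineGate {n : ℕ} (M : Matrix (Fin n) (Fin n) (ZMod 2)) (w : Fin n → ZMod 2) :
    Gate n :=
  Matrix.of fun a b => if a = M.mulVec b + w then 1 else 0

-- sign helper
noncomputable def esgn (x : ZMod 2) : ℂ := (-1 : ℂ) ^ x.val

lemma zmod2_cases (x : ZMod 2) : x = 0 ∨ x = 1 := by revert x; decide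

lemma esgn_zero : esgn 0 = 1 := by simp [esgn]

lemma esgn_one : esgn 1 = -1 := by simp [esgn, ZMod.val_one]

lemma esgn_add (x y : ZMod 2) : esgn (x + y) = esgn x * esgn y := by
  rcases zmod2_cases x with rfl | rfl <;> rcases zmod2_cases y with rfl | rfl <;>
    simp [esgn_zero, esgn_one, show (1 + 1 : ZMod 2) = 0 from by decide]

lemma esgn_sub (x y : ZMod 2) : esgn (x - y) = esgn x * esgn y := by
  rcases zmod2_cases x with rfl | rfl <;> rcases zmod2_cases y with rfl | rfl <;>
    simp [esgn_zero, esgn_one, show (1 - 1 : ZMod 2) = 0 from by decide,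
      show (0 - 1 : ZMod 2) = 1 from by decide]

lemma esgn_sum {ι : Type*} (s : Finset ι) (f : ι → ZMod 2) :
    esgn (∑ i ∈ s, f i) = ∏ i ∈ s, esgn (f i) := by
  classical
  induction s using Finset.induction with
  | empty => simp [esgn]
  | @insert _ _ h ih => rw [Finset.sum_insert h, Finset.prod_insert h, esgn_add, ih]

lemma pow_sum_eq {n : ℕ} (v b : Fin n → ZMod 2) :
    (-1 : ℂ) ^ (∑ i, (v i * b i).val) = esgn (v ⬝ᵥ b) := by
  rw [dotProduct, esgn_sum, ← Finset.prod_pow_eq_pow_sum]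
  rfl

lemma esgn_one_or (t : ZMod 2) : esgn t = 1 ∨ esgn t = -1 := by
  rcases zmod2_cases t with rfl | rfl <;> simp [esgn_zero, esgn_one]

lemma coef_mem {c : ℂ} (hc : c = 1 ∨ c = -1 ∨ c = Complex.I ∨ c = -Complex.I) (t : ZMod 2) :
    c * esgn t = 1 ∨ c * esgn t = -1 ∨ c * esgn t = Complex.I ∨ c * esgn t = -Complex.I := by
  rcases esgn_one_or t with h | h <;> rw [h] <;>
    rcases hc with rfl | rfl | rfl | rfl <;> norm_num

lemma permGate_mul {n : ℕ} (σ : Equiv.Perm (Fin n → ZMod 2)) (P : Gate n) :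
    permGate σ * P = Matrix.of fun a y => P (σ.symm a) y := by
  ext a y
  rw [Matrix.mul_apply]
  calc ∑ x, permGate σ a x * P x y
      = ∑ x, if x = σ.symm a then P x y else 0 := by
        refine Finset.sum_congr rfl fun x _ => ?_
        by_cases h : x = σ.symm a
        · subst h; simp [permGate]
        · rw [if_neg h]
          have : a ≠ σ x := fun hc => h (by simp [hc])
          simp [permGate, this]
    _ = P (σ.symm a) y := by rw [Finset.sum_ite_eq']; simp

lemma mul_permGate_conjTranspose {n : ℕ} (σ : Equiv.Perm (Fin n → ZMod 2)) (P : Gate n) :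
    P * (permGate σ)ᴴ = Matrix.of fun x b => P x (σ.symm b) := by
  ext x b
  rw [Matrix.mul_apply]
  calc ∑ y, P x y * (permGate σ)ᴴ y b
      = ∑ y, if y = σ.symm b then P x y else 0 := by
        refine Finset.sum_congr rfl fun y _ => ?_
        by_cases h : y = σ.symm b
        · subst h; simp [permGate, Matrix.conjTranspose_apply]
        · rw [if_neg h]
          have : b ≠ σ y := fun hc => h (by simp [hc])
          simp [permGate, Matrix.conjTranspose_apply, this]
    _ = P x (σ.symm b) := by rw [Finset.sum_ite_eq']; simp

lemma conj_permGate {n : ℕ} (σ : Equiv.Perm (Fin n → ZMod 2)) (P : Gate n) :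
    permGate σ * P * (permGate σ)ᴴ = Matrix.of fun a b => P (σ.symm a) (σ.symm b) := by
  rw [permGate_mul, mul_permGate_conjTranspose]
  rfl

lemma permGate_unitary {n : ℕ} (σ : Equiv.Perm (Fin n → ZMod 2)) :
    IsUnitaryGate (permGate σ) := by
  rw [IsUnitaryGate, Matrix.mem_unitaryGroup_iff, Matrix.star_eq_conjTranspose]
  have h := conj_permGate σ (1 : Gate n)
  rw [mul_one] at h
  rw [h]
  ext a b
  by_cases hab : a = b
  · subst hab; simp [Matrix.one_apply]
  · have : σ.symm a ≠ σ.symm b := fun hc => hab (σ.symm.injective hc)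
    simp [Matrix.one_apply, hab, this]

lemma hC1 {n : ℕ} : CliffordHierarchy n 1 = PauliGroup n := rfl

lemma hC2 {n : ℕ} : CliffordHierarchy n 2 =
    { U | IsUnitaryGate U ∧ ∀ P ∈ PauliGroup n, U * P * Uᴴ ∈ PauliGroup n } := rfl


/-- For any invertible `M` over `𝔽₂` and any `w`, the permutation gate `|v⟩ ↦ |Mv + w⟩`
is Clifford; conversely, every Clifford permutation gate has this form. -/
theorem cliffordPerm_iff_affine (n : ℕ) (hn : 1 ≤ n) :
    (∀ (M : Matrix (Fin n) (Fin n) (ZMod 2)) (w : Fin n → ZMod 2), IsUnit M →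
      affineGate M w ∈ CliffordHierarchy n 2) ∧
    (∀ U : Gate n, IsPermGate U → U ∈ CliffordHierarchy n 2 →
      ∃ (M : Matrix (Fin n) (Fin n) (ZMod 2)) (w : Fin n → ZMod 2),
        IsUnit M ∧ U = affineGate M w) := by
  constructor
  · intro M w hM
    have hdet : IsUnit M.det := (Matrix.isUnit_iff_isUnit_det M).mp hM
    let σ : Equiv.Perm (Fin n → ZMod 2) :=
      { toFun := fun b => M.mulVec b + w
        invFun := fun a => M⁻¹.mulVec (a - w)
        left_inv := fun b => by
          simp [Matrix.mulVec_mulVec, Matrix.nonsing_inv_mul M hdet]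
        right_inv := fun a => by
          simp [Matrix.mulVec_mulVec, Matrix.mul_nonsing_inv M hdet] }
    have hAff : affineGate M w = permGate σ := rfl
    rw [hC2, hAff]
    refine ⟨permGate_unitary σ, ?_⟩
    intro P hP
    obtain ⟨c, u, v, hc, rfl⟩ := hP
    rw [conj_permGate]
    have hsymm : ∀ x, σ.symm x = M⁻¹.mulVec (x - w) := fun _ => rfl
    have happ : ∀ x, σ x = M.mulVec x + w := fun _ => rfl
    have hb2 : ∀ b, M.mulVec (σ.symm b + u) + w = b + M.mulVec u := by
      intro b
      have hb : M.mulVec (σ.symm b) + w = b := σ.apply_symm_apply b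
      rw [Matrix.mulVec_add, add_right_comm, hb]
    have key : ∀ a b : Fin n → ZMod 2,
        (σ.symm a = σ.symm b + u) ↔ (a = b + M.mulVec u) := by
      intro a b
      constructor
      · intro h
        have h' := congrArg σ h
        rw [Equiv.apply_symm_apply] at h'
        rw [h', happ, hb2]
      · intro h
        subst h
        rw [Equiv.symm_apply_eq, happ]
        exact (hb2 b).symm
    have h2 : ∀ x, v ⬝ᵥ (M⁻¹ *ᵥ x) = ((M⁻¹)ᵀ *ᵥ v) ⬝ᵥ x := by
      intro x
      have hv := Matrix.vecMul_transpose (M⁻¹)ᵀ v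
      rw [Matrix.transpose_transpose] at hv
      rw [Matrix.dotProduct_mulVec, hv]
    refine ⟨c * esgn (v ⬝ᵥ M⁻¹.mulVec w), M.mulVec u, (M⁻¹)ᵀ.mulVec v,
      coef_mem hc _, ?_⟩
    ext a b
    simp only [Matrix.of_apply]
    by_cases h : a = b + M.mulVec u
    · rw [if_pos ((key a b).mpr h), if_pos h, pow_sum_eq, pow_sum_eq]
      have h1 : v ⬝ᵥ σ.symm b = ((M⁻¹)ᵀ.mulVec v) ⬝ᵥ b - v ⬝ᵥ (M⁻¹.mulVec w) := by
        rw [hsymm, Matrix.mulVec_sub, dotProduct_sub, h2 b]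
      rw [h1, esgn_sub]
      ring
    · rw [if_neg (fun hc2 => h ((key a b).mp hc2)), if_neg h]
  · intro U hperm hU
    obtain ⟨σ, rfl⟩ := hperm
    rw [hC2] at hU
    obtain ⟨-, hP⟩ := hU
    have key : ∀ u x, σ (x + u) = σ x + (σ u - σ 0) := by
      intro u x
      have hXu : (Matrix.of fun a b => if a = b + u then (1:ℂ) else 0) ∈ PauliGroup n := by
        refine ⟨1, u, 0, Or.inl rfl, ?_⟩
        ext a b
        simp
      have h2 := hP _ hXu
      rw [conj_permGate] at h2
      obtain ⟨c, u', v', hc, heq⟩ := h2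
      have hval : ∀ b, σ (σ.symm b + u) = b + u' := by
        intro b
        have h3 := congrFun (congrFun heq (σ (σ.symm b + u))) b
        simp only [Matrix.of_apply, Equiv.symm_apply_apply] at h3
        rw [if_true] at h3
        by_contra hne
        rw [if_neg hne] at h3
        exact one_ne_zero h3
      have hx := hval (σ x)
      rw [Equiv.symm_apply_apply] at hx
      have h0 := hval (σ 0)
      rw [Equiv.symm_apply_apply, zero_add] at h0
      have hu' : u' = σ u - σ 0 := by rw [h0]; abel
      rw [hx, hu']
    set f : (Fin n → ZMod 2) → (Fin n → ZMod 2) := fun x => σ x - σ 0 with hf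
    have hσf : ∀ x, σ x = f x + σ 0 := fun x => by simp [hf]
    have hadd : ∀ x y, f (x + y) = f x + f y := by
      intro x y
      simp only [hf]
      rw [key y x]
      abel
    have hinj : Function.Injective f := by
      intro x y hxy
      have hσ : σ x = σ y := by rw [hσf x, hσf y, hxy]
      exact σ.injective hσ
    let F : (Fin n → ZMod 2) →+ (Fin n → ZMod 2) := AddMonoidHom.mk' f hadd
    let L : (Fin n → ZMod 2) →ₗ[ZMod 2] (Fin n → ZMod 2) := AddMonoidHom.toZModLinearMap 2 F
    have hLf : ∀ x, L x = f x := fun x => rfl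
    have hbij : Function.Bijective L :=
      Finite.injective_iff_bijective.mp (fun x y h => hinj h)
    let E := LinearEquiv.ofBijective L hbij
    have hmul : ∀ x, (LinearMap.toMatrix' L).mulVec x = f x := fun x => by
      rw [← Matrix.toLin'_apply, Matrix.toLin'_toMatrix']
      exact hLf x
    have hcomp1 : L ∘ₗ (E.symm : (Fin n → ZMod 2) →ₗ[ZMod 2] (Fin n → ZMod 2)) = LinearMap.id :=
      LinearMap.ext fun x => E.apply_symm_apply x
    have hcomp2 : (E.symm : (Fin n → ZMod 2) →ₗ[ZMod 2] (Fin n → ZMod 2)) ∘ₗ L = LinearMap.id :=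
      LinearMap.ext fun x => E.symm_apply_apply x
    have hunit : IsUnit (LinearMap.toMatrix' L) := by
      rw [isUnit_iff_exists]
      refine ⟨LinearMap.toMatrix' (E.symm : (Fin n → ZMod 2) →ₗ[ZMod 2] (Fin n → ZMod 2)), ?_, ?_⟩
      · rw [← LinearMap.toMatrix'_comp, hcomp1, LinearMap.toMatrix'_id]
      · rw [← LinearMap.toMatrix'_comp, hcomp2, LinearMap.toMatrix'_id]
    refine ⟨LinearMap.toMatrix' L, σ 0, hunit, ?_⟩
    ext a b
    show (if a = σ b then (1:ℂ) else 0) = if a = (LinearMap.toMatrix' L).mulVec b + σ 0 then 1 else 0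
    rw [hmul b, ← hσf b]
end

section
/- Let A be a maximal abelian subgroup of 𝒫ₙ and let B be any abelian subgroup of 𝒫ₙ. Then there exists a maximal abelian subgroup A' of 𝒫ₙ such that B ⊆ A' ⊆ ⟨A, B⟩, where ⟨A, B⟩ is the subgroup generated by A and B. -/
open Matrix

/-- A set of gates that is a subgroup: contains the identity and is closed under
multiplication and inverses. -/
def IsSubgroupSet {n : ℕ} (S : Set (Gate n)) : Prop :=
  (1 : Gate n) ∈ S ∧ (∀ a ∈ S, ∀ b ∈ S, a * b ∈ S) ∧ ∀ a ∈ S, a⁻¹ ∈ S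

def IsAbelianSet {n : ℕ} (S : Set (Gate n)) : Prop :=
  ∀ a ∈ S, ∀ b ∈ S, a * b = b * a

/-- A maximal abelian subgroup of `𝒫ₙ`: an abelian subgroup of `𝒫ₙ` not properly
contained in any abelian subgroup of `𝒫ₙ`. -/
def IsMaxAbelianSubgroupOfPauli {n : ℕ} (S : Set (Gate n)) : Prop :=
  S ⊆ PauliGroup n ∧ IsSubgroupSet S ∧ IsAbelianSet S ∧
  ∀ T, T ⊆ PauliGroup n → IsSubgroupSet T → IsAbelianSet T → S ⊆ T → T = S

namespace PP

noncomputable section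
variable {n : ℕ}

def ee (x : ZMod 2) : ℂ := (-1 : ℂ) ^ x.val

lemma z2 : ∀ x : ZMod 2, x = 0 ∨ x = 1 := by decide

lemma ee_zero : ee (0 : ZMod 2) = 1 := by simp [ee]

lemma ee_one : ee (1 : ZMod 2) = -1 := by
  simp [ee, ZMod.val_one]

lemma ee_add (x y : ZMod 2) : ee (x + y) = ee x * ee y := by
  rcases z2 x with rfl | rfl <;> rcases z2 y with rfl | rfl
  · simp [ee_zero]
  · simp [ee_zero]
  · simp [ee_zero]
  · rw [show ((1:ZMod 2) + 1) = 0 by decide, ee_zero, ee_one]; norm_num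

lemma ee_sq (x : ZMod 2) : ee x * ee x = 1 := by
  rcases z2 x with rfl | rfl <;> simp [ee_zero, ee_one]

lemma ee_ne_zero (x : ZMod 2) : ee x ≠ 0 := by
  rcases z2 x with rfl | rfl <;> simp [ee_zero, ee_one]

lemma ee_inj {x y : ZMod 2} (h : ee x = ee y) : x = y := by
  rcases z2 x with rfl | rfl <;> rcases z2 y with rfl | rfl <;>
    simp_all [ee_zero, ee_one] <;> norm_num at h

lemma ee_sum {ι : Type*} (s : Finset ι) (f : ι → ZMod 2) :
    ee (∑ i ∈ s, f i) = ∏ i ∈ s, ee (f i) := by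
  classical
  induction s using Finset.cons_induction with
  | empty => simp [ee_zero]
  | cons a s ha ih => rw [Finset.sum_cons, Finset.prod_cons, ee_add, ih]

def Es (v b : Fin n → ZMod 2) : ℂ := ∏ i, ee (v i * b i)

def s2 (v b : Fin n → ZMod 2) : ZMod 2 := ∑ i, v i * b i

lemma Es_eq (v b : Fin n → ZMod 2) : Es v b = ee (s2 v b) := (ee_sum _ _).symm

lemma Es_add_left (v w b : Fin n → ZMod 2) : Es (v + w) b = Es v b * Es w b := by
  simp [Es, ← Finset.prod_mul_distrib, add_mul, ee_add]

lemma Es_add_right (v b c : Fin n → ZMod 2) : Es v (b + c) = Es v b * Es v c := by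
  simp [Es, ← Finset.prod_mul_distrib, mul_add, ee_add]

lemma Es_zero_left (b : Fin n → ZMod 2) : Es (0 : Fin n → ZMod 2) b = 1 := by
  simp [Es, ee_zero]

lemma Es_zero_right (v : Fin n → ZMod 2) : Es v 0 = 1 := by
  simp [Es, ee_zero]

lemma Es_sq (v b : Fin n → ZMod 2) : Es v b * Es v b = 1 := by
  rw [Es_eq, ee_sq]

lemma Es_ne_zero (v b : Fin n → ZMod 2) : Es v b ≠ 0 := by
  rw [Es_eq]; exact ee_ne_zero _

def Pm (c : ℂ) (u v : Fin n → ZMod 2) : Gate n :=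
  Matrix.of fun a b => if a = b + u then c * Es v b else 0

lemma Pm_mul (c c' : ℂ) (u v u' v' : Fin n → ZMod 2) :
    Pm c u v * Pm c' u' v' = Pm (c * c' * Es v u') (u + u') (v + v') := by
  ext a b
  simp only [Pm, Matrix.mul_apply, Matrix.of_apply]
  rw [Finset.sum_eq_single (b + u')]
  · rw [if_pos rfl, show b + u' + u = b + (u + u') by abel]
    split_ifs with h1
    · rw [Es_add_right, Es_add_left]; ring
    · ring
  · intro x _ hx
    rw [if_neg hx, mul_zero]
  · intro h; exact absurd (Finset.mem_univ _) h

lemma Pm_one : Pm (1 : ℂ) (0 : Fin n → ZMod 2) 0 = 1 := by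
  ext a b
  simp [Pm, Es_zero_left, Matrix.one_apply, eq_comm]

-- characterization of the 4 phases
lemma phase_iff {c : ℂ} :
    (c = 1 ∨ c = -1 ∨ c = Complex.I ∨ c = -Complex.I) ↔ c ^ 4 = 1 := by
  constructor
  · rintro (rfl | rfl | rfl | rfl)
    · norm_num
    · norm_num
    · rw [show (4:ℕ) = 2*2 from rfl, pow_mul, Complex.I_sq]; norm_num
    · rw [show (4:ℕ) = 2*2 from rfl, pow_mul, neg_sq, Complex.I_sq]; norm_num
  · intro h
    have h2 : (c - 1) * ((c + 1) * ((c - Complex.I) * (c + Complex.I))) = 0 := by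
      linear_combination (1 - c ^ 2) * Complex.I_sq + h
    rcases mul_eq_zero.1 h2 with h3 | h3
    · exact Or.inl (sub_eq_zero.1 h3)
    rcases mul_eq_zero.1 h3 with h4 | h4
    · exact Or.inr (Or.inl (eq_neg_of_add_eq_zero_left h4))
    rcases mul_eq_zero.1 h4 with h5 | h5
    · exact Or.inr (Or.inr (Or.inl (sub_eq_zero.1 h5)))
    · exact Or.inr (Or.inr (Or.inr (eq_neg_of_add_eq_zero_left h5)))

lemma phase_ne_zero {c : ℂ} (h : c ^ 4 = 1) : c ≠ 0 := by
  rintro rfl; simp at h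


lemma Pm_eq_of (c : ℂ) (u v : Fin n → ZMod 2) :
    Pm c u v = Matrix.of fun a b =>
      if a = b + u then c * (-1 : ℂ) ^ (∑ i, (v i * b i).val) else 0 := by
  ext a b
  simp only [Pm, Matrix.of_apply]
  congr 1
  rw [Es, ← Finset.prod_pow_eq_pow_sum]
  rfl

lemma mem_pauli_iff {P : Gate n} :
    P ∈ PauliGroup n ↔ ∃ c u v, c ^ 4 = 1 ∧ P = Pm c u v := by
  constructor
  · rintro ⟨c, u, v, hc, rfl⟩
    exact ⟨c, u, v, phase_iff.1 hc, (Pm_eq_of c u v).symm⟩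
  · rintro ⟨c, u, v, hc, rfl⟩
    exact ⟨c, u, v, phase_iff.2 hc, Pm_eq_of c u v⟩

lemma Pm_mem_pauli {c : ℂ} (hc : c ^ 4 = 1) (u v : Fin n → ZMod 2) :
    Pm c u v ∈ PauliGroup n := mem_pauli_iff.2 ⟨c, u, v, hc, rfl⟩

lemma one_mem_pauli : (1 : Gate n) ∈ PauliGroup n :=
  mem_pauli_iff.2 ⟨1, 0, 0, by norm_num, Pm_one.symm⟩

lemma mul_phase4 {c c' : ℂ} (hc : c ^ 4 = 1) (hc' : c' ^ 4 = 1)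
    (v u' : Fin n → ZMod 2) : (c * c' * Es v u') ^ 4 = 1 := by
  have h2 : Es v u' ^ 2 = 1 := by rw [sq, Es_sq]
  have h4 : (Es v u') ^ 4 = 1 := by
    rw [show (4:ℕ) = 2*2 from rfl, pow_mul, h2, one_pow]
  rw [mul_pow, mul_pow, hc, hc', h4]; norm_num

lemma pauli_mul {g h : Gate n} (hg : g ∈ PauliGroup n) (hh : h ∈ PauliGroup n) :
    g * h ∈ PauliGroup n := by
  obtain ⟨c, u, v, hc, rfl⟩ := mem_pauli_iff.1 hg
  obtain ⟨c', u', v', hc', rfl⟩ := mem_pauli_iff.1 hh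
  rw [Pm_mul]
  exact Pm_mem_pauli (mul_phase4 hc hc' v u') _ _

lemma pi_add_self (u : Fin n → ZMod 2) : u + u = 0 := by
  funext i
  rcases z2 (u i) with h | h <;> simp [h] <;> decide

lemma pauli_sq {c : ℂ} (hc : c ^ 4 = 1) (u v : Fin n → ZMod 2) :
    Pm c u v * Pm c u v = Pm (c ^ 2 * Es v u) 0 0 := by
  rw [Pm_mul, pi_add_self, pi_add_self, sq]

lemma pauli_four {g : Gate n} (hg : g ∈ PauliGroup n) : g * (g * (g * g)) = 1 := by
  obtain ⟨c, u, v, hc, rfl⟩ := mem_pauli_iff.1 hg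
  have h2 := pauli_sq hc u v
  have : Pm c u v * (Pm c u v * (Pm c u v * Pm c u v)) =
      (Pm c u v * Pm c u v) * (Pm c u v * Pm c u v) := by
    simp only [mul_assoc]
  rw [this, h2, Pm_mul, Es_zero_left, pi_add_self, ← Pm_one]
  congr 1
  have := Es_sq v u
  have h4 : (c^2 * Es v u) * (c^2 * Es v u) = c^4 * (Es v u * Es v u) := by ring
  rw [h4, this, hc]; ring

lemma pauli_inv_eq {g : Gate n} (hg : g ∈ PauliGroup n) : g⁻¹ = g * (g * g) :=
  Matrix.inv_eq_right_inv (by rw [← mul_assoc, ← mul_assoc] at *; simpa [mul_assoc] using pauli_four hg)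

lemma Pm_inj {c c' : ℂ} {u v u' v' : Fin n → ZMod 2} (hc : c ≠ 0)
    (h : Pm c u v = Pm c' u' v') : c = c' ∧ u = u' ∧ v = v' := by
  have h1 : Pm c u v u 0 = Pm c' u' v' u 0 := by rw [h]
  simp only [Pm, Matrix.of_apply] at h1
  rw [if_pos (by rw [zero_add]), Es_zero_right, mul_one, zero_add] at h1
  by_cases huu : u = u'
  · rw [if_pos huu, Es_zero_right, mul_one] at h1
    subst huu
    refine ⟨h1, rfl, funext fun j => ?_⟩
    have h2 : Pm c u v (Pi.single j 1 + u) (Pi.single j 1) =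
        Pm c' u v' (Pi.single j 1 + u) (Pi.single j 1) := by rw [h]
    simp only [Pm, Matrix.of_apply, if_pos rfl] at h2
    rw [← h1] at h2
    have h3 : Es v (Pi.single j 1) = Es v' (Pi.single j 1) := by
      exact mul_left_cancel₀ hc h2
    rw [Es, Es] at h3
    rw [Finset.prod_eq_single j (fun i _ hij => by
        rw [Pi.single_eq_of_ne hij, mul_zero, ee_zero]) (by simp),
      Finset.prod_eq_single j (fun i _ hij => by
        rw [Pi.single_eq_of_ne hij, mul_zero, ee_zero]) (by simp)] at h3
    rw [Pi.single_eq_same, mul_one, mul_one] at h3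
    exact ee_inj h3
  · rw [if_neg huu] at h1
    exact absurd h1 hc

lemma Pm_phase_inj {c c' : ℂ} {u v : Fin n → ZMod 2}
    (h : Pm c u v = Pm c' u v) : c = c' := by
  have h1 : Pm c u v u 0 = Pm c' u v u 0 := by rw [h]
  simp only [Pm, Matrix.of_apply] at h1
  rw [if_pos (by rw [zero_add]), Es_zero_right] at h1
  simpa using h1

lemma zmod2_eq_iff : ∀ a b : ZMod 2, a = b ↔ a + b = 0 := by decide

lemma commute_iff {c c' : ℂ} {u v u' v' : Fin n → ZMod 2}
    (hc : c ^ 4 = 1) (hc' : c' ^ 4 = 1) :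
    Pm c u v * Pm c' u' v' = Pm c' u' v' * Pm c u v ↔ s2 v u' + s2 v' u = 0 := by
  rw [Pm_mul, Pm_mul, add_comm u' u, add_comm v' v]
  constructor
  · intro h
    have h2 := Pm_phase_inj h
    have hne : c * c' ≠ 0 := mul_ne_zero (phase_ne_zero hc) (phase_ne_zero hc')
    have h3 : Es v u' = Es v' u := by
      have : c * c' * Es v u' = c * c' * Es v' u := by rw [h2]; ring
      exact mul_left_cancel₀ hne this
    rw [Es_eq, Es_eq] at h3
    rw [← zmod2_eq_iff]
    exact ee_inj h3
  · intro h
    have h3 : Es v u' = Es v' u := by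
      rw [Es_eq, Es_eq, (zmod2_eq_iff _ _).2 h]
    rw [h3, mul_comm c c']

-- Symplectic form over ZMod 2
abbrev V (n : ℕ) := (Fin n → ZMod 2) × (Fin n → ZMod 2)

lemma s2_add_left (v w u : Fin n → ZMod 2) : s2 (v + w) u = s2 v u + s2 w u := by
  simp [s2, add_mul, Finset.sum_add_distrib]

lemma s2_add_right (v u w : Fin n → ZMod 2) : s2 v (u + w) = s2 v u + s2 v w := by
  simp [s2, mul_add, Finset.sum_add_distrib]

lemma s2_smul_left (c : ZMod 2) (v u : Fin n → ZMod 2) : s2 (c • v) u = c * s2 v u := by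
  simp [s2, Finset.mul_sum, mul_assoc]

lemma s2_smul_right (c : ZMod 2) (v u : Fin n → ZMod 2) : s2 v (c • u) = c * s2 v u := by
  simp [s2, Finset.mul_sum]; ring_nf
  apply Finset.sum_congr rfl; intros; ring

lemma s2_zero_left (u : Fin n → ZMod 2) : s2 (0 : Fin n → ZMod 2) u = 0 := by simp [s2]

lemma s2_zero_right (v : Fin n → ZMod 2) : s2 v 0 = 0 := by simp [s2]

def Bf (n : ℕ) : LinearMap.BilinForm (ZMod 2) (V n) :=
  LinearMap.mk₂ (ZMod 2) (fun x y => s2 x.2 y.1 + s2 y.2 x.1)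
    (fun x x' y => by
      simp only [Prod.fst_add, Prod.snd_add, s2_add_left, s2_add_right]; ring)
    (fun c x y => by
      simp only [Prod.smul_fst, Prod.smul_snd, s2_smul_left, s2_smul_right,
        smul_eq_mul]; ring)
    (fun x y y' => by
      simp only [Prod.fst_add, Prod.snd_add, s2_add_left, s2_add_right]; ring)
    (fun c x y => by
      simp only [Prod.smul_fst, Prod.smul_snd, s2_smul_left, s2_smul_right,
        smul_eq_mul]; ring)

lemma Bf_apply (x y : V n) : Bf n x y = s2 x.2 y.1 + s2 y.2 x.1 := rfl

lemma Bf_comm (x y : V n) : Bf n x y = Bf n y x := by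
  rw [Bf_apply, Bf_apply, add_comm]

lemma Bf_refl : (Bf n).IsRefl := fun x y h => by rwa [Bf_comm]

lemma s2_single (v : Fin n → ZMod 2) (j : Fin n) : s2 v (Pi.single j 1) = v j := by
  rw [s2, Finset.sum_eq_single j (fun i _ hij => by rw [Pi.single_eq_of_ne hij, mul_zero])
    (by simp)]
  rw [Pi.single_eq_same, mul_one]

lemma s2_single_left (v : Fin n → ZMod 2) (j : Fin n) : s2 (Pi.single j 1) v = v j := by
  rw [s2, Finset.sum_eq_single j (fun i _ hij => by rw [Pi.single_eq_of_ne hij, zero_mul])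
    (by simp)]
  rw [Pi.single_eq_same, one_mul]

lemma Bf_nondeg : (Bf n).Nondegenerate := by
  suffices hL : LinearMap.SeparatingLeft (Bf n) from
    ⟨hL, fun y hy => hL y fun x => by rw [Bf_comm]; exact hy x⟩
  intro x hx
  have h1 : ∀ j, x.2 j = 0 := fun j => by
    have := hx (Pi.single j 1, 0)
    rwa [Bf_apply, s2_zero_left, add_zero, s2_single] at this
  have h2 : ∀ j, x.1 j = 0 := fun j => by
    have := hx (0, Pi.single j 1)
    rwa [Bf_apply, s2_zero_right, zero_add, s2_single_left] at this
  exact Prod.ext (funext h2) (funext h1)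

instance : Fact (Nat.Prime 2) := ⟨Nat.prime_two⟩

lemma orth_sup (U W : Submodule (ZMod 2) (V n)) :
    (Bf n).orthogonal (U ⊔ W) = (Bf n).orthogonal U ⊓ (Bf n).orthogonal W := by
  refine le_antisymm (le_inf ((Bf n).orthogonal_le le_sup_left)
    ((Bf n).orthogonal_le le_sup_right)) ?_
  rintro x ⟨hxU, hxW⟩ m hm
  rcases Submodule.mem_sup.1 hm with ⟨p, hp, q, hq, rfl⟩
  have := hxU p hp
  have := hxW q hq
  rw [map_add, LinearMap.add_apply, ‹(Bf n) p x = 0›, ‹(Bf n) q x = 0›, add_zero]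

lemma orth_inf (U W : Submodule (ZMod 2) (V n)) :
    (Bf n).orthogonal (U ⊓ W) = (Bf n).orthogonal U ⊔ (Bf n).orthogonal W := by
  have hU := LinearMap.BilinForm.orthogonal_orthogonal Bf_nondeg Bf_refl U
  have hW := LinearMap.BilinForm.orthogonal_orthogonal Bf_nondeg Bf_refl W
  have hS := LinearMap.BilinForm.orthogonal_orthogonal Bf_nondeg Bf_refl
    ((Bf n).orthogonal U ⊔ (Bf n).orthogonal W)
  conv_lhs => rw [← hU, ← hW, ← orth_sup, hS]

lemma perp_key {L W : Submodule (ZMod 2) (V n)}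
    (hL : (Bf n).orthogonal L = L) (hW : W ≤ (Bf n).orthogonal W) :
    (Bf n).orthogonal ((L ⊓ (Bf n).orthogonal W) ⊔ W) ≤ (L ⊓ (Bf n).orthogonal W) ⊔ W := by
  rw [orth_sup, orth_inf, hL,
    LinearMap.BilinForm.orthogonal_orthogonal Bf_nondeg Bf_refl]
  rintro x ⟨hx1, hx2⟩
  rcases Submodule.mem_sup.1 hx1 with ⟨l, hl, w, hw, rfl⟩
  have hlW : l ∈ (Bf n).orthogonal W := by
    have h1 : (l + w) - w ∈ (Bf n).orthogonal W := Submodule.sub_mem _ hx2 (hW hw)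
    simpa using h1
  exact Submodule.mem_sup.2 ⟨l, ⟨hl, hlW⟩, w, hw, rfl⟩

-- Footprints
def fp (S : Set (Gate n)) : Set (V n) := {x | ∃ c, c ^ 4 = 1 ∧ Pm c x.1 x.2 ∈ S}

def fpSub (S : Set (Gate n)) (h1 : (1 : Gate n) ∈ S)
    (hmul : ∀ a ∈ S, ∀ b ∈ S, a * b ∈ S) : Submodule (ZMod 2) (V n) where
  carrier := fp S
  zero_mem' := ⟨1, by norm_num, by
    show Pm 1 (0 : Fin n → ZMod 2) 0 ∈ S
    rw [Pm_one]; exact h1⟩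
  add_mem' := by
    rintro x y ⟨c, hc, hx⟩ ⟨c', hc', hy⟩
    refine ⟨c * c' * Es x.2 y.1, mul_phase4 hc hc' _ _, ?_⟩
    have := hmul _ hx _ hy
    rwa [Pm_mul] at this
  smul_mem' := by
    intro c x hx
    rcases z2 c with rfl | rfl
    · rw [zero_smul]
      exact ⟨1, by norm_num, by
        show Pm 1 (0 : Fin n → ZMod 2) 0 ∈ S
        rw [Pm_one]; exact h1⟩
    · rwa [one_smul]

lemma mem_fpSub {S : Set (Gate n)} {h1 hmul} {x : V n} :
    x ∈ fpSub S h1 hmul ↔ ∃ c, c ^ 4 = 1 ∧ Pm c x.1 x.2 ∈ S := Iff.rfl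

-- Subgroup sets
lemma isSubgroupSet_of {S : Set (Gate n)} (hS : S ⊆ PauliGroup n) (h1 : (1 : Gate n) ∈ S)
    (hmul : ∀ a ∈ S, ∀ b ∈ S, a * b ∈ S) : IsSubgroupSet S :=
  ⟨h1, hmul, fun a ha => by
    rw [pauli_inv_eq (hS ha)]
    exact hmul _ ha _ (hmul _ ha _ ha)⟩

lemma max_selfCent {A : Set (Gate n)} (hA : IsMaxAbelianSubgroupOfPauli A) :
    ∀ g ∈ PauliGroup n, (∀ a ∈ A, g * a = a * g) → g ∈ A := by
  obtain ⟨hAP, ⟨hA1, hAmul, _⟩, hAab, hAmax⟩ := hA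
  intro g hg hcomm
  set T : Set (Gate n) := {x | ∃ (k : ℕ) (a : Gate n), a ∈ A ∧ x = g ^ k * a} with hT
  have hcomm' : ∀ (k : ℕ) (a : Gate n), a ∈ A → a * g ^ k = g ^ k * a := fun k a ha =>
    ((Commute.pow_left (hcomm a ha) k).symm).eq
  have hTP : T ⊆ PauliGroup n := by
    rintro x ⟨k, a, ha, rfl⟩
    have hgk : g ^ k ∈ PauliGroup n := by
      induction k with
      | zero => rw [pow_zero]; exact one_mem_pauli
      | succ m ih => rw [pow_succ]; exact pauli_mul ih hg
    exact pauli_mul hgk (hAP ha)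
  have key : ∀ (k m : ℕ) (a b : Gate n), a ∈ A →
      g ^ k * a * (g ^ m * b) = g ^ (k + m) * (a * b) := by
    intro k m a b ha
    rw [mul_assoc (g ^ k) a (g ^ m * b), ← mul_assoc a (g ^ m) b, hcomm' m a ha,
      mul_assoc (g ^ m) a b, ← mul_assoc (g ^ k) (g ^ m) (a * b), ← pow_add]
  have hT1 : (1 : Gate n) ∈ T := ⟨0, 1, hA1, by rw [pow_zero, one_mul]⟩
  have hTmul : ∀ a ∈ T, ∀ b ∈ T, a * b ∈ T := by
    rintro _ ⟨k, a, ha, rfl⟩ _ ⟨m, b, hb, rfl⟩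
    exact ⟨k + m, a * b, hAmul a ha b hb, key k m a b ha⟩
  have hTab : IsAbelianSet T := by
    rintro _ ⟨k, a, ha, rfl⟩ _ ⟨m, b, hb, rfl⟩
    rw [key k m a b ha, key m k b a hb, hAab a ha b hb, add_comm]
  have hAT : A ⊆ T := fun a ha => ⟨0, a, ha, by rw [pow_zero, one_mul]⟩
  have hTA := hAmax T hTP (isSubgroupSet_of hTP hT1 hTmul) hTab hAT
  rw [← hTA]
  exact ⟨1, 1, hA1, by rw [pow_one, mul_one]⟩

lemma selfCent_max {A : Set (Gate n)} (hAP : A ⊆ PauliGroup n) (hgrp : IsSubgroupSet A)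
    (hab : IsAbelianSet A)
    (hsc : ∀ g ∈ PauliGroup n, (∀ a ∈ A, g * a = a * g) → g ∈ A) :
    IsMaxAbelianSubgroupOfPauli A :=
  ⟨hAP, hgrp, hab, fun T hTP _ hTab hAT =>
    Set.Subset.antisymm (fun t ht => hsc t (hTP ht) fun a ha => hTab t ht a (hAT ha)) hAT⟩

end
end PP

open PP in
/-- If `A` is a maximal abelian subgroup of `𝒫ₙ` and `B` is an abelian subgroup of `𝒫ₙ`,
then there is a maximal abelian subgroup `A'` of `𝒫ₙ` with `B ⊆ A' ⊆ ⟨A, B⟩`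
(the last inclusion being expressed as: `A'` is contained in every subgroup
containing both `A` and `B`). -/
theorem exists_maxAbelian_between (n : ℕ) (hn : 1 ≤ n) (A B : Set (Gate n))
    (hA : IsMaxAbelianSubgroupOfPauli A)
    (hB : B ⊆ PauliGroup n) (hBgrp : IsSubgroupSet B) (hBab : IsAbelianSet B) :
    ∃ A', IsMaxAbelianSubgroupOfPauli A' ∧ B ⊆ A' ∧
      ∀ T : Set (Gate n), IsSubgroupSet T → A ⊆ T → B ⊆ T → A' ⊆ T := by
  classical
  have hsc := max_selfCent hA
  obtain ⟨hAP, ⟨hA1, hAmul, _⟩, hAab, _⟩ := hA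
  obtain ⟨hB1, hBmul, _⟩ := hBgrp
  set A' : Set (Gate n) :=
    {x | ∃ a b : Gate n, a ∈ A ∧ (∀ y ∈ B, a * y = y * a) ∧ b ∈ B ∧ x = a * b} with hA'def
  have hswap : ∀ a b a' b' : Gate n, (∀ y ∈ B, a' * y = y * a') → b ∈ B →
      (a * b) * (a' * b') = (a * a') * (b * b') := by
    intro a b a' b' hc hb
    have h1 : b * a' = a' * b := (hc b hb).symm
    rw [mul_assoc a b (a' * b'), ← mul_assoc b a' b', h1, mul_assoc a' b b',
      ← mul_assoc a a' (b * b')]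
  have hA'P : A' ⊆ PauliGroup n := by
    rintro _ ⟨a, b, ha, _, hb, rfl⟩
    exact pauli_mul (hAP ha) (hB hb)
  have hA'mul : ∀ x ∈ A', ∀ y ∈ A', x * y ∈ A' := by
    rintro _ ⟨a, b, ha, hac, hb, rfl⟩ _ ⟨a', b', ha', hac', hb', rfl⟩
    refine ⟨a * a', b * b', hAmul a ha a' ha', ?_, hBmul b hb b' hb',
      hswap a b a' b' hac' hb⟩
    intro y hy
    rw [mul_assoc, hac' y hy, ← mul_assoc, hac y hy, mul_assoc]
  have hA'1 : (1 : Gate n) ∈ A' :=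
    ⟨1, 1, hA1, fun y _ => by rw [one_mul, mul_one], hB1, (one_mul 1).symm⟩
  have hA'grp := isSubgroupSet_of hA'P hA'1 hA'mul
  have hA'ab : IsAbelianSet A' := by
    rintro _ ⟨a, b, ha, hac, hb, rfl⟩ _ ⟨a', b', ha', hac', hb', rfl⟩
    rw [hswap a b a' b' hac' hb, hswap a' b' a b hac hb', hAab a ha a' ha',
      hBab b hb b' hb']
  have hBA' : B ⊆ A' := fun b hb =>
    ⟨1, b, hA1, fun y _ => by rw [one_mul, mul_one], hb, (one_mul b).symm⟩
  have hA'T : ∀ T : Set (Gate n), IsSubgroupSet T → A ⊆ T → B ⊆ T → A' ⊆ T := by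
    rintro T hTgrp hAT hBT _ ⟨a, b, ha, _, hb, rfl⟩
    exact hTgrp.2.1 a (hAT ha) b (hBT hb)
  -- footprint submodules
  set L := fpSub A hA1 hAmul with hLdef
  set W := fpSub B hB1 hBmul with hWdef
  set M := fpSub A' hA'1 hA'mul with hMdef
  have hLperp : (Bf n).orthogonal L = L := by
    apply le_antisymm
    · intro z hz
      refine ⟨1, by norm_num, hsc _ (Pm_mem_pauli (by norm_num) _ _) ?_⟩
      intro a ha
      obtain ⟨ca, ua, va, hca, rfl⟩ := mem_pauli_iff.1 (hAP ha)
      have hmem : ((ua, va) : V n) ∈ L := ⟨ca, hca, ha⟩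
      have h0 : Bf n ((ua, va) : V n) (z.1, z.2) = 0 := hz _ hmem
      rw [Bf_comm, Bf_apply] at h0
      exact (commute_iff (by norm_num) hca).2 h0
    · intro x hx
      obtain ⟨cx, hcx, hxA⟩ := hx
      intro m hm
      obtain ⟨cm, hcm, hmA⟩ := hm
      have hco := hAab _ hmA _ hxA
      have h0 := (commute_iff hcm hcx).1 hco
      show Bf n m x = 0
      rw [Bf_apply]
      exact h0
  have hWperp : W ≤ (Bf n).orthogonal W := by
    intro x hx
    obtain ⟨cx, hcx, hxB⟩ := hx
    intro m hm
    obtain ⟨cm, hcm, hmB⟩ := hm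
    have hco := hBab _ hmB _ hxB
    have h0 := (commute_iff hcm hcx).1 hco
    show Bf n m x = 0
    rw [Bf_apply]
    exact h0
  have hM : M = (L ⊓ (Bf n).orthogonal W) ⊔ W := by
    apply le_antisymm
    · rintro x ⟨c, hc, hxA'⟩
      obtain ⟨a, b, ha, hac, hb, heq⟩ := hxA'
      obtain ⟨ca, ua, va, hca, rfl⟩ := mem_pauli_iff.1 (hAP ha)
      obtain ⟨cb, ub, vb, hcb, rfl⟩ := mem_pauli_iff.1 (hB hb)
      rw [Pm_mul] at heq
      obtain ⟨_, hu, hv⟩ := Pm_inj (phase_ne_zero hc) heq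
      have hxa : ((ua, va) : V n) ∈ L ⊓ (Bf n).orthogonal W := by
        refine ⟨⟨ca, hca, ha⟩, ?_⟩
        intro m hm
        obtain ⟨cm, hcm, hmB⟩ := hm
        have hco := hac _ hmB
        have h0 := (commute_iff hca hcm).1 hco
        show Bf n m ((ua, va) : V n) = 0
        rw [Bf_comm, Bf_apply]
        exact h0
      have hxb : ((ub, vb) : V n) ∈ W := ⟨cb, hcb, hb⟩
      exact Submodule.mem_sup.2 ⟨_, hxa, _, hxb, (Prod.ext hu.symm hv.symm)⟩
    · refine sup_le ?_ ?_
      · rintro p ⟨⟨cp, hcp, hpA⟩, ho⟩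
        refine ⟨cp, hcp, Pm cp p.1 p.2, 1, hpA, ?_, hB1, (mul_one _).symm⟩
        intro y hy
        obtain ⟨cy, uy, vy, hcy, rfl⟩ := mem_pauli_iff.1 (hB hy)
        have hmem : ((uy, vy) : V n) ∈ W := ⟨cy, hcy, hy⟩
        have h0 : Bf n ((uy, vy) : V n) p = 0 := ho _ hmem
        rw [Bf_comm, Bf_apply] at h0
        exact (commute_iff hcp hcy).2 h0
      · rintro x ⟨c, hc, hxB⟩
        exact ⟨c, hc, hBA' hxB⟩
  have hA'sc : ∀ g ∈ PauliGroup n, (∀ a ∈ A', g * a = a * g) → g ∈ A' := by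
    intro g hg hcommg
    obtain ⟨c, u, v, hc, rfl⟩ := mem_pauli_iff.1 hg
    have hxM : ((u, v) : V n) ∈ (Bf n).orthogonal M := by
      intro m hm
      obtain ⟨cm, hcm, hmA'⟩ := hm
      have hco := hcommg _ hmA'
      have h0 := (commute_iff hc hcm).1 hco
      show Bf n m ((u, v) : V n) = 0
      rw [Bf_comm, Bf_apply]
      exact h0
    have hxM' : ((u, v) : V n) ∈ M := by
      have hk := perp_key hLperp hWperp
      rw [← hM] at hk
      exact hk hxM
    obtain ⟨c₀, hc₀, hxA'⟩ := hxM'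
    have hc₀ne := phase_ne_zero hc₀
    have hd : (c * c₀⁻¹) ^ 4 = 1 := by
      rw [mul_pow, hc, one_mul, inv_pow, hc₀, inv_one]
    have hdA' : Pm (c * c₀⁻¹) 0 0 ∈ A' := by
      have hdA : Pm (c * c₀⁻¹) 0 0 ∈ A := by
        refine hsc _ (Pm_mem_pauli hd _ _) ?_
        intro a ha
        obtain ⟨ca, ua, va, hca, rfl⟩ := mem_pauli_iff.1 (hAP ha)
        exact (commute_iff hd hca).2
          (by rw [s2_zero_left, s2_zero_right, add_zero])
      refine ⟨Pm (c * c₀⁻¹) 0 0, 1, hdA, ?_, hB1, (mul_one _).symm⟩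
      intro y hy
      obtain ⟨cy, uy, vy, hcy, rfl⟩ := mem_pauli_iff.1 (hB hy)
      exact (commute_iff hd hcy).2
        (by rw [s2_zero_left, s2_zero_right, add_zero])
    have heq : Pm c u v = Pm (c * c₀⁻¹) 0 0 * Pm c₀ u v := by
      rw [Pm_mul, Es_zero_left, zero_add, zero_add, mul_one]
      congr 1
      field_simp
    rw [heq]
    exact hA'mul _ hdA' _ hxA'
  exact ⟨A', selfCent_max hA'P hA'grp hA'ab hA'sc, hBA', hA'T⟩
end
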